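/- Let N be a positive integer and m a divisor of N. Define F_m = ∑_{k ∣ N/m} μ(k)·e_{km} in the free abelian group on symbols {e_s : s ∣ N}, where μ is the Möbius function. Then for any divisor d of N with d ≠ N: ∑_{m : d ∣ m ∣ N, m ≠ N} F_m = e_d − e_N. -/

import Mathlib

open ArithmeticFunction

private lemma sum_moebius_divisors (n : ℕ) :
    ∑ k ∈ n.divisors, moebius k = if n = 1 then 1 else 0 := by
  rw [← coe_mul_zeta_apply, moebius_mul_coe_zeta, one_apply]

private lemma full_sum_eq (N d : ℕ) (hN : 0 < N) (hd : d ∣ N) :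
    (∑ m ∈ N.divisors.filter (d ∣ ·),
        ∑ k ∈ (N / m).divisors, Finsupp.single (k * m) (moebius k)) =
      Finsupp.single d (1 : ℤ) := by
  have hd0 : 0 < d := Nat.pos_of_dvd_of_pos hd hN
  have key : (∑ s ∈ N.divisors.filter (d ∣ ·),
      ∑ k ∈ (s / d).divisors, Finsupp.single s (moebius k)) =
      Finsupp.single d (1 : ℤ) := by
    have hcong : ∀ s ∈ N.divisors.filter (d ∣ ·),
        (∑ k ∈ (s / d).divisors, Finsupp.single s (moebius k)) =
          if s = d then Finsupp.single d (1 : ℤ) else 0 := by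
      intro s hs
      rw [Finset.mem_filter, Nat.mem_divisors] at hs
      obtain ⟨⟨hsN, hN0⟩, hds⟩ := hs
      rw [← Finsupp.single_finset_sum, sum_moebius_divisors]
      by_cases h : s = d
      · subst h
        simp [Nat.div_self hd0]
      · have : s / d ≠ 1 := by
          intro h1
          exact h (by rw [← Nat.div_mul_cancel hds, h1, one_mul])
        simp [h, this]
    rw [Finset.sum_congr rfl hcong, Finset.sum_ite_eq' _ d (fun _ => Finsupp.single d (1 : ℤ))]
    simp [Nat.mem_divisors, hd, hN.ne', dvd_refl]
  rw [← key]
  rw [Finset.sum_sigma', Finset.sum_sigma']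
  apply Finset.sum_nbij' (i := fun p => (⟨p.2 * p.1, p.2⟩ : Σ _ : ℕ, ℕ))
    (j := fun p => (⟨p.1 / p.2, p.2⟩ : Σ _ : ℕ, ℕ))
  · rintro ⟨m, k⟩ hp
    simp only [Finset.mem_sigma, Finset.mem_filter, Nat.mem_divisors] at hp ⊢
    obtain ⟨⟨⟨hmN, -⟩, hdm⟩, hk, hNm0⟩ := hp
    have hm0 : 0 < m := Nat.pos_of_dvd_of_pos hmN hN
    have hkmN : k * m ∣ N := by
      obtain ⟨c, hc⟩ := hk
      obtain ⟨u, hu⟩ := hmN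
      refine ⟨c, ?_⟩
      have : u = N / m := by rw [hu, Nat.mul_div_cancel_left _ hm0]
      rw [hu, this, hc]; ring
    refine ⟨⟨⟨hkmN, hN.ne'⟩, hdm.mul_left k⟩, ?_, ?_⟩
    · rw [Nat.mul_div_assoc k hdm]
      exact dvd_mul_right k (m / d)
    · intro h
      have hkm0 : 0 < k * m := Nat.pos_of_dvd_of_pos hkmN hN
      have hle := Nat.le_of_dvd hkm0 (hdm.mul_left k)
      rw [Nat.div_eq_zero_iff] at h
      omega
  · rintro ⟨s, k⟩ hp
    simp only [Finset.mem_sigma, Finset.mem_filter, Nat.mem_divisors] at hp ⊢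
    obtain ⟨⟨⟨hsN, -⟩, hds⟩, hk, hsd0⟩ := hp
    have hs0 : 0 < s := Nat.pos_of_dvd_of_pos hsN hN
    have hk0 : 0 < k := by
      rcases Nat.eq_zero_or_pos k with h | h
      · subst h; exact absurd (Nat.eq_zero_of_zero_dvd hk) (by
          intro h0; exact hsd0 h0)
      · exact h
    have hks : k ∣ s := hk.trans (Nat.div_dvd_of_dvd hds)
    refine ⟨⟨⟨(Nat.div_dvd_of_dvd hks).trans hsN, hN.ne'⟩, ?_⟩, ?_, ?_⟩
    · -- d ∣ s / k
      obtain ⟨u, hu⟩ := hk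
      refine ⟨u, ?_⟩
      have hs_eq : s = d * (k * u) := by
        rw [← hu, Nat.mul_div_cancel' hds]
      rw [hs_eq, mul_comm k u, ← mul_assoc, Nat.mul_div_cancel _ hk0]
    · -- k ∣ N / (s / k)
      obtain ⟨v, hv⟩ := hsN
      refine ⟨v, ?_⟩
      have h1 : s = s / k * k := (Nat.div_mul_cancel hks).symm
      have hsk0 : 0 < s / k := Nat.div_pos (Nat.le_of_dvd hs0 hks) hk0
      have h2 : N = s / k * (k * v) := by rw [← mul_assoc, ← h1, hv]
      rw [h2, Nat.mul_div_cancel_left _ hsk0]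
    · intro h
      have hsk0 : 0 < s / k := Nat.div_pos (Nat.le_of_dvd hs0 hks) hk0
      have hle := Nat.le_of_dvd hN ((Nat.div_dvd_of_dvd hks).trans hsN)
      rw [Nat.div_eq_zero_iff] at h
      omega
  · rintro ⟨m, k⟩ hp
    simp only [Finset.mem_sigma, Finset.mem_filter, Nat.mem_divisors] at hp
    obtain ⟨⟨⟨hmN, -⟩, -⟩, hk, -⟩ := hp
    have hk0 : 0 < k := Nat.pos_of_mem_divisors (Nat.mem_divisors.mpr ⟨hk, by
      intro h0
      have hm0 : 0 < m := Nat.pos_of_dvd_of_pos hmN hN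
      have := Nat.div_eq_zero_iff |>.mp h0
      have := Nat.le_of_dvd hN hmN
      omega⟩)
    simp [Nat.mul_div_cancel_left _ hk0]
  · rintro ⟨s, k⟩ hp
    simp only [Finset.mem_sigma, Finset.mem_filter, Nat.mem_divisors] at hp
    obtain ⟨⟨⟨hsN, -⟩, hds⟩, hk, hsd0⟩ := hp
    have hs0 : 0 < s := Nat.pos_of_dvd_of_pos hsN hN
    have hks : k ∣ s := hk.trans (Nat.div_dvd_of_dvd hds)
    simp [Nat.mul_div_cancel' hks]
  · rintro ⟨m, k⟩ _
    rfl

/-- With F_m = ∑_{k ∣ N/m} μ(k)·e_{km} in the free abelian group on symbols e_s,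
    for any divisor d of N with d ≠ N one has ∑_{d ∣ m ∣ N, m ≠ N} F_m = e_d − e_N. -/
theorem sum_Fm_eq_single_sub_single (N d : ℕ) (hN : 0 < N) (hd : d ∣ N) (hdN : d ≠ N) :
    (∑ m ∈ N.divisors.filter (fun m => d ∣ m ∧ m ≠ N),
        ∑ k ∈ (N / m).divisors, Finsupp.single (k * m) (moebius k)) =
      Finsupp.single d (1 : ℤ) - Finsupp.single N (1 : ℤ) := by
  have hfilter : N.divisors.filter (fun m => d ∣ m ∧ m ≠ N) =
      (N.divisors.filter (d ∣ ·)).erase N := by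
    ext m
    simp only [Finset.mem_filter, Finset.mem_erase]
    tauto
  have hNmem : N ∈ N.divisors.filter (d ∣ ·) :=
    Finset.mem_filter.mpr ⟨Nat.mem_divisors.mpr ⟨dvd_refl N, hN.ne'⟩, hd⟩
  rw [hfilter, Finset.sum_erase_eq_sub hNmem, full_sum_eq N d hN hd]
  congr 1
  rw [Nat.div_self hN]
  simp
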